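/- Along any solution of Hamilton's equations for the Kepler-Heisenberg Hamiltonian, the quantity J = x p_x + y p_y + 2 z p_z satisfies dJ/dt = 2H. In particular, J is constant along any solution with zero energy. -/

import Mathlib

open Real

/-- The Kepler-Heisenberg Hamiltonian H = K + U on phase space coordinates. -/
noncomputable def Ham (x y z px py pz : ℝ) : ℝ :=
  (1/2) * ((px - y/2 * pz)^2 + (py + x/2 * pz)^2)
    - 1 / (8 * Real.pi * Real.sqrt ((x^2 + y^2)^2 + 16 * z^2))

/-- A solution of Hamilton's equations q̇ = ∂H/∂p, ṗ = -∂H/∂q for the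
Kepler-Heisenberg Hamiltonian, avoiding the singular set (x,y,z) = 0. -/
def IsSolution (x y z px py pz : ℝ → ℝ) : Prop :=
  (∀ t : ℝ, ¬ (x t = 0 ∧ y t = 0 ∧ z t = 0)) ∧
  ∀ t : ℝ,
    HasDerivAt x (deriv (fun s => Ham (x t) (y t) (z t) s (py t) (pz t)) (px t)) t ∧
    HasDerivAt y (deriv (fun s => Ham (x t) (y t) (z t) (px t) s (pz t)) (py t)) t ∧
    HasDerivAt z (deriv (fun s => Ham (x t) (y t) (z t) (px t) (py t) s) (pz t)) t ∧
    HasDerivAt px (-(deriv (fun s => Ham s (y t) (z t) (px t) (py t) (pz t)) (x t))) t ∧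
    HasDerivAt py (-(deriv (fun s => Ham (x t) s (z t) (px t) (py t) (pz t)) (y t))) t ∧
    HasDerivAt pz (-(deriv (fun s => Ham (x t) (y t) s (px t) (py t) (pz t)) (z t))) t

/-- derivative of the potential term 1/(8π√(f s)). -/
lemma potDeriv {f : ℝ → ℝ} {c A A' : ℝ} (hf : HasDerivAt f A' c) (hfc : f c = A)
    (hA : 0 < A) :
    HasDerivAt (fun s => 1 / (8 * Real.pi * Real.sqrt (f s)))
      (-(A' / (16 * Real.pi * Real.sqrt A * A))) c := by
  have hR : 0 < Real.sqrt A := Real.sqrt_pos.2 hA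
  have hs : HasDerivAt (fun s => Real.sqrt (f s)) (A' / (2 * Real.sqrt A)) c := by
    have h := (Real.hasDerivAt_sqrt (by rw [hfc]; exact hA.ne')).comp c hf
    simp only [Function.comp_def, hfc] at h
    convert h using 1
    · rfl
    · rfl
    ring
  have h2 : HasDerivAt (fun s => 8 * Real.pi * Real.sqrt (f s))
      (8 * Real.pi * (A' / (2 * Real.sqrt A))) c := hs.const_mul _
  have hne : 8 * Real.pi * Real.sqrt (f c) ≠ 0 := by
    rw [hfc]; positivity
  have h3 := h2.inv hne
  rw [hfc] at h3
  convert h3 using 1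
  · rfl
  · rfl
  · funext s; rw [one_div]; rfl
  · have hsq : (8 * Real.pi * Real.sqrt A) ^ 2 = 64 * Real.pi ^ 2 * A := by
      rw [mul_pow, mul_pow, Real.sq_sqrt hA.le]; ring
    rw [hsq]
    have hpi := Real.pi_ne_zero
    field_simp
    ring

lemma dHpx (X Y Z PX PY PZ : ℝ) :
    deriv (fun s => Ham X Y Z s PY PZ) PX = PX - Y/2 * PZ := by
  have h : HasDerivAt (fun s => Ham X Y Z s PY PZ) (PX - Y/2 * PZ) PX := by
    simp only [Ham]
    have := (((((hasDerivAt_id PX).sub_const (Y/2 * PZ)).pow 2).add_const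
      ((PY + X/2 * PZ)^2)).const_mul (1/2 : ℝ)).sub_const
      (1 / (8 * Real.pi * Real.sqrt ((X^2 + Y^2)^2 + 16 * Z^2)))
    convert this using 1
    · rfl
    · rfl
    · rfl
    simp only [id_eq, pow_one]; ring
  exact h.deriv

lemma dHpy (X Y Z PX PY PZ : ℝ) :
    deriv (fun s => Ham X Y Z PX s PZ) PY = PY + X/2 * PZ := by
  have h : HasDerivAt (fun s => Ham X Y Z PX s PZ) (PY + X/2 * PZ) PY := by
    simp only [Ham]
    have := (((((hasDerivAt_id PY).add_const (X/2 * PZ)).pow 2).const_add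
      ((PX - Y/2 * PZ)^2)).const_mul (1/2 : ℝ)).sub_const
      (1 / (8 * Real.pi * Real.sqrt ((X^2 + Y^2)^2 + 16 * Z^2)))
    convert this using 1
    · rfl
    · rfl
    · rfl
    simp only [id_eq, pow_one]; ring
  exact h.deriv

lemma dHpz (X Y Z PX PY PZ : ℝ) :
    deriv (fun s => Ham X Y Z PX PY s) PZ
      = -(Y/2) * (PX - Y/2 * PZ) + X/2 * (PY + X/2 * PZ) := by
  have h1 : HasDerivAt (fun s : ℝ => (PX - Y/2 * s)^2)
      (2 * (PX - Y/2 * PZ) ^ 1 * (-(Y/2))) PZ := by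
    have hb : HasDerivAt (fun s : ℝ => PX - Y/2 * s) (-(Y/2)) PZ := by
      have := ((hasDerivAt_id PZ).const_mul (Y/2)).const_sub PX
      simpa using this
    exact hb.pow 2
  have h2 : HasDerivAt (fun s : ℝ => (PY + X/2 * s)^2)
      (2 * (PY + X/2 * PZ) ^ 1 * (X/2)) PZ := by
    have hb : HasDerivAt (fun s : ℝ => PY + X/2 * s) (X/2) PZ := by
      have := ((hasDerivAt_id PZ).const_mul (X/2)).const_add PY
      simpa using this
    exact hb.pow 2
  have h : HasDerivAt (fun s => Ham X Y Z PX PY s)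
      (-(Y/2) * (PX - Y/2 * PZ) + X/2 * (PY + X/2 * PZ)) PZ := by
    simp only [Ham]
    have := ((h1.add h2).const_mul (1/2 : ℝ)).sub_const
      (1 / (8 * Real.pi * Real.sqrt ((X^2 + Y^2)^2 + 16 * Z^2)))
    convert this using 1
    · rfl
    · rfl
    · rfl
    ring
  exact h.deriv

lemma dHx (X Y Z PX PY PZ : ℝ) (hpos : 0 < (X^2 + Y^2)^2 + 16 * Z^2) :
    deriv (fun s => Ham s Y Z PX PY PZ) X
      = PZ/2 * (PY + X/2 * PZ)
        + X * (X^2 + Y^2) / (4 * Real.pi * Real.sqrt ((X^2 + Y^2)^2 + 16 * Z^2)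
            * ((X^2 + Y^2)^2 + 16 * Z^2)) := by
  have hf : HasDerivAt (fun s : ℝ => (s^2 + Y^2)^2 + 16 * Z^2)
      (2 * (X^2 + Y^2) ^ 1 * (2 * X ^ 1)) X :=
    (((hasDerivAt_pow 2 X).add_const (Y^2)).pow 2).add_const (16 * Z^2)
  have hpot := potDeriv hf rfl hpos
  have hK : HasDerivAt (fun s : ℝ => (1/2) * ((PX - Y/2 * PZ)^2 + (PY + s/2 * PZ)^2))
      (PZ/2 * (PY + X/2 * PZ)) X := by
    have hb : HasDerivAt (fun s : ℝ => PY + s/2 * PZ) (1/2 * PZ) X := by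
      have := (((hasDerivAt_id X).div_const 2).mul_const PZ).const_add PY
      simpa using this
    have := ((hb.pow 2).const_add ((PX - Y/2 * PZ)^2)).const_mul (1/2 : ℝ)
    convert this using 1
    · rfl
    · rfl
    · rfl
    ring
  have h : HasDerivAt (fun s => Ham s Y Z PX PY PZ)
      (PZ/2 * (PY + X/2 * PZ)
        + X * (X^2 + Y^2) / (4 * Real.pi * Real.sqrt ((X^2 + Y^2)^2 + 16 * Z^2)
            * ((X^2 + Y^2)^2 + 16 * Z^2))) X := by
    simp only [Ham]
    have := hK.sub hpot
    convert this using 1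
    · rfl
    · rfl
    · rfl
    have hR : (0:ℝ) < Real.sqrt ((X^2 + Y^2)^2 + 16 * Z^2) := Real.sqrt_pos.2 hpos
    have hpi := Real.pi_ne_zero
    field_simp
    ring
  exact h.deriv

lemma dHy (X Y Z PX PY PZ : ℝ) (hpos : 0 < (X^2 + Y^2)^2 + 16 * Z^2) :
    deriv (fun s => Ham X s Z PX PY PZ) Y
      = -(PZ/2) * (PX - Y/2 * PZ)
        + Y * (X^2 + Y^2) / (4 * Real.pi * Real.sqrt ((X^2 + Y^2)^2 + 16 * Z^2)
            * ((X^2 + Y^2)^2 + 16 * Z^2)) := by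
  have hf : HasDerivAt (fun s : ℝ => (X^2 + s^2)^2 + 16 * Z^2)
      (2 * (X^2 + Y^2) ^ 1 * (2 * Y ^ 1)) Y :=
    (((hasDerivAt_pow 2 Y).const_add (X^2)).pow 2).add_const (16 * Z^2)
  have hpot := potDeriv hf rfl hpos
  have hK : HasDerivAt (fun s : ℝ => (1/2) * ((PX - s/2 * PZ)^2 + (PY + X/2 * PZ)^2))
      (-(PZ/2) * (PX - Y/2 * PZ)) Y := by
    have hb : HasDerivAt (fun s : ℝ => PX - s/2 * PZ) (-(1/2 * PZ)) Y := by
      have := (((hasDerivAt_id Y).div_const 2).mul_const PZ).const_sub PX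
      simpa using this
    have := ((hb.pow 2).add_const ((PY + X/2 * PZ)^2)).const_mul (1/2 : ℝ)
    convert this using 1
    · rfl
    · rfl
    · rfl
    ring
  have h : HasDerivAt (fun s => Ham X s Z PX PY PZ)
      (-(PZ/2) * (PX - Y/2 * PZ)
        + Y * (X^2 + Y^2) / (4 * Real.pi * Real.sqrt ((X^2 + Y^2)^2 + 16 * Z^2)
            * ((X^2 + Y^2)^2 + 16 * Z^2))) Y := by
    simp only [Ham]
    have := hK.sub hpot
    convert this using 1
    · rfl
    · rfl
    · rfl
    have hR : (0:ℝ) < Real.sqrt ((X^2 + Y^2)^2 + 16 * Z^2) := Real.sqrt_pos.2 hpos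
    have hpi := Real.pi_ne_zero
    field_simp
    ring
  exact h.deriv

lemma dHz (X Y Z PX PY PZ : ℝ) (hpos : 0 < (X^2 + Y^2)^2 + 16 * Z^2) :
    deriv (fun s => Ham X Y s PX PY PZ) Z
      = 2 * Z / (Real.pi * Real.sqrt ((X^2 + Y^2)^2 + 16 * Z^2)
            * ((X^2 + Y^2)^2 + 16 * Z^2)) := by
  have hf : HasDerivAt (fun s : ℝ => (X^2 + Y^2)^2 + 16 * s^2)
      (16 * (2 * Z ^ 1)) Z :=
    ((hasDerivAt_pow 2 Z).const_mul 16).const_add ((X^2 + Y^2)^2)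
  have hpot := potDeriv hf rfl hpos
  have h : HasDerivAt (fun s => Ham X Y s PX PY PZ)
      (2 * Z / (Real.pi * Real.sqrt ((X^2 + Y^2)^2 + 16 * Z^2)
            * ((X^2 + Y^2)^2 + 16 * Z^2))) Z := by
    simp only [Ham]
    have := (hasDerivAt_const Z ((1/2) * ((PX - Y/2 * PZ)^2 + (PY + X/2 * PZ)^2))).sub hpot
    convert this using 1
    · rfl
    · rfl
    · rfl
    have hR : (0:ℝ) < Real.sqrt ((X^2 + Y^2)^2 + 16 * Z^2) := Real.sqrt_pos.2 hpos
    have hpi := Real.pi_ne_zero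
    field_simp
    ring
  exact h.deriv

lemma posA (X Y Z : ℝ) (h0 : ¬ (X = 0 ∧ Y = 0 ∧ Z = 0)) :
    0 < (X^2 + Y^2)^2 + 16 * Z^2 := by
  rcases lt_or_eq_of_le (by positivity : (0:ℝ) ≤ (X^2 + Y^2)^2 + 16 * Z^2) with h | h
  · exact h
  · exfalso
    apply h0
    have hA := h.symm
    have hxy2 : (X^2 + Y^2)^2 = 0 := by nlinarith [sq_nonneg Z]
    have hxy : X^2 + Y^2 = 0 := by
      have := sq_nonneg (X^2 + Y^2); nlinarith
    have hx2 : X^2 = 0 := by nlinarith [sq_nonneg Y]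
    have hy2 : Y^2 = 0 := by nlinarith [sq_nonneg X]
    have hz2 : Z^2 = 0 := by nlinarith [sq_nonneg (X^2 + Y^2)]
    exact ⟨pow_eq_zero_iff two_ne_zero |>.mp hx2,
      pow_eq_zero_iff two_ne_zero |>.mp hy2,
      pow_eq_zero_iff two_ne_zero |>.mp hz2⟩

/-- Along any solution, J = x p_x + y p_y + 2 z p_z satisfies dJ/dt = 2H;
    in particular J is constant along zero-energy solutions. -/
theorem J_derivative (x y z px py pz : ℝ → ℝ)
    (h : IsSolution x y z px py pz) :
    (∀ t : ℝ, HasDerivAt (fun u => x u * px u + y u * py u + 2 * z u * pz u)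
        (2 * Ham (x t) (y t) (z t) (px t) (py t) (pz t)) t) ∧
    ((∀ t : ℝ, Ham (x t) (y t) (z t) (px t) (py t) (pz t) = 0) →
      ∀ s t : ℝ, x s * px s + y s * py s + 2 * z s * pz s
        = x t * px t + y t * py t + 2 * z t * pz t) := by
  have key : ∀ t : ℝ, HasDerivAt (fun u => x u * px u + y u * py u + 2 * z u * pz u)
      (2 * Ham (x t) (y t) (z t) (px t) (py t) (pz t)) t := by
    intro t
    obtain ⟨hx', hy', hz', hpx', hpy', hpz'⟩ := h.2 t
    have hpos := posA (x t) (y t) (z t) (h.1 t)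
    rw [dHpx] at hx'
    rw [dHpy] at hy'
    rw [dHpz] at hz'
    rw [dHx _ _ _ _ _ _ hpos] at hpx'
    rw [dHy _ _ _ _ _ _ hpos] at hpy'
    rw [dHz _ _ _ _ _ _ hpos] at hpz'
    have hJ := ((hx'.mul hpx').add (hy'.mul hpy')).add ((hz'.const_mul 2).mul hpz')
    convert hJ using 1
    · rfl
    · rfl
    · rfl
    have hR : (0:ℝ) < Real.sqrt ((x t^2 + y t^2)^2 + 16 * z t^2) := Real.sqrt_pos.2 hpos
    have hpi := Real.pi_ne_zero
    simp only [Ham]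
    field_simp
    ring
  refine ⟨key, fun hE s t => ?_⟩
  have hz' : ∀ u : ℝ, HasDerivAt (fun u => x u * px u + y u * py u + 2 * z u * pz u) 0 u := by
    intro u
    simpa [hE u] using key u
  exact is_const_of_deriv_eq_zero (fun u => (hz' u).differentiableAt)
    (fun u => (hz' u).deriv) s t
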